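/- Let 𝕋 be an almost periodic time scale (Π ≠ {0}) and u ∈ U_∞^Inv. If (f_m)_{m∈ℕ} ⊂ PAP(𝕋,ℝⁿ,u) and f : 𝕋 → ℝⁿ satisfy ‖f_m − f‖_∞ → 0 as m → ∞, then f ∈ PAP(𝕋,ℝⁿ,u). -/

import Mathlib

open MeasureTheory Filter Set

noncomputable section

/-- Forward jump operator of a time scale `T`. -/
def tsSigma (T : Set ℝ) (t : ℝ) : ℝ := sInf {s | s ∈ T ∧ t < s}

/-- Graininess of a time scale. -/
def tsGrain (T : Set ℝ) (t : ℝ) : ℝ := tsSigma T t - t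

/-- The set `Π` of translation numbers of a time scale. -/
def tsPi (T : Set ℝ) : Set ℝ := {τ : ℝ | ∀ t ∈ T, t + τ ∈ T ∧ t - τ ∈ T}

/-- An almost periodic time scale: a nonempty closed subset of `ℝ` with `Π ≠ {0}`. -/
def APTimeScale (T : Set ℝ) : Prop :=
  T.Nonempty ∧ IsClosed T ∧ ∃ τ ∈ tsPi T, τ ≠ 0

/-- The Δ-measure of the time scale `T`:
Lebesgue measure restricted to `T` plus point masses `μ(t)·δ_t` at right-scattered points. -/
def deltaMeasure (T : Set ℝ) : Measure ℝ :=
  volume.restrict T +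
    Measure.sum (fun p : {t : ℝ // t ∈ T ∧ t < tsSigma T t} =>
      (ENNReal.ofReal (tsGrain T p.1)) • Measure.dirac (p.1 : ℝ))

/-- The integrand `g_a` appearing in the generalized exponential function. -/
def gExp (T : Set ℝ) (a : ℝ) (τ : ℝ) : ℝ :=
  if 0 < tsGrain T τ then Real.log (1 + tsGrain T τ * a) / tsGrain T τ else a

/-- The generalized exponential function `e_{⊖a}(t, s)` (intended for `s ≤ t`). -/
def eOminus (T : Set ℝ) (a t s : ℝ) : ℝ :=
  Real.exp (-∫ τ in Ico s t ∩ T, gExp T a τ ∂(deltaMeasure T))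

/-- `t̄ = min([0,∞) ∩ T)`. -/
def tsT0 (T : Set ℝ) : ℝ := sInf {t : ℝ | t ∈ T ∧ 0 ≤ t}

/-- `Q_r = [t̄ - r, t̄ + r] ∩ T`. -/
def Qr (T : Set ℝ) (r : ℝ) : Set ℝ := Icc (tsT0 T - r) (tsT0 T + r) ∩ T

/-- `u(Q_r) = ∫_{Q_r} u dμ_Δ`. -/
def uQ (T : Set ℝ) (u : ℝ → ℝ) (r : ℝ) : ℝ := ∫ t in Qr T r, u t ∂(deltaMeasure T)

/-- The filter `r → ∞` along `Π`. -/
def alongPi (T : Set ℝ) : Filter ℝ := atTop ⊓ 𝓟 (tsPi T)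

/-- The filter `|t| → ∞`, `t ∈ T`. -/
def absAtTopIn (T : Set ℝ) : Filter ℝ := (atTop ⊔ atBot) ⊓ 𝓟 T

/-- The class `U_∞` of admissible weights on the time scale `T`. -/
def UInfty (T : Set ℝ) (u : ℝ → ℝ) : Prop :=
  Measurable u ∧ (∀ t ∈ T, 0 < u t) ∧
  (∀ s : Set ℝ, Bornology.IsBounded s → IntegrableOn u (s ∩ T) (deltaMeasure T)) ∧
  (∃ c > 0, ∀ t ∈ T, c ≤ u t) ∧
  Tendsto (uQ T u) (alongPi T) atTop

/-- The class `U_∞^Inv` of weights: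
`limsup_{|t|→∞, t∈T} u(t+s)/u(t) < ∞` for every `s ∈ Π`. -/
def UInftyInv (T : Set ℝ) (u : ℝ → ℝ) : Prop :=
  UInfty T u ∧ ∀ s ∈ tsPi T, ∃ C : ℝ, ∀ᶠ t in absAtTopIn T, u (t + s) / u t ≤ C

variable {E : Type*} [NormedAddCommGroup E]

/-- Almost periodic functions on a time scale (Bohr-type definition via `Π`). -/
def APfun (T : Set ℝ) (f : ℝ → E) : Prop :=
  ContinuousOn f T ∧
  ∀ ε > 0, ∃ l > 0, ∀ x : ℝ, ∃ τ ∈ tsPi T, τ ∈ Icc x (x + l) ∧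
    ∀ t ∈ T, ‖f (t + τ) - f t‖ < ε

/-- Bounded continuous functions on the time scale `T`. -/
def BCfun (T : Set ℝ) (f : ℝ → E) : Prop :=
  ContinuousOn f T ∧ ∃ C : ℝ, ∀ t ∈ T, ‖f t‖ ≤ C

/-- The weighted ergodic space `PAP₀(T, E, u)`. -/
def PAP0fun (T : Set ℝ) (u : ℝ → ℝ) (f : ℝ → E) : Prop :=
  BCfun T f ∧
  Tendsto (fun r => (uQ T u r)⁻¹ * ∫ t in Qr T r, ‖f t‖ * u t ∂(deltaMeasure T))
    (alongPi T) (nhds 0)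

/-- Weighted pseudo-almost periodic functions on the time scale `T`. -/
def PAPfun (T : Set ℝ) (u : ℝ → ℝ) (f : ℝ → E) : Prop :=
  ∃ g h : ℝ → E, APfun T g ∧ PAP0fun T u h ∧ ∀ t ∈ T, f t = g t + h t

/-- `d` is the Δ-derivative of `f` at `t ∈ T`. -/
def deltaDeriv [NormedSpace ℝ E] (T : Set ℝ) (f : ℝ → E) (t : ℝ) (d : E) : Prop :=
  ∀ ε > 0, ∃ δ > 0, ∀ s ∈ T, |s - t| < δ →
    ‖f (tsSigma T t) - f s - (tsSigma T t - s) • d‖ ≤ ε * |tsSigma T t - s|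

/-- A fixed matrix norm (the ℓ¹ norm of the entries). -/
def matNorm {n : ℕ} (M : Matrix (Fin n) (Fin n) ℝ) : ℝ := ∑ i, ∑ j, |M i j|

/-- The linear system `x^Δ = A(t) x` admits an exponential dichotomy on `T`. -/
def ExpDichotomy {n : ℕ} (T : Set ℝ) (A : ℝ → Matrix (Fin n) (Fin n) ℝ) : Prop :=
  ∃ K > (0 : ℝ), ∃ α > (0 : ℝ), ∃ P : Matrix (Fin n) (Fin n) ℝ, P * P = P ∧
    ∃ X : ℝ → Matrix (Fin n) (Fin n) ℝ,
      (∀ t ∈ T, IsUnit (X t)) ∧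
      (∀ t ∈ T, ∀ i j, deltaDeriv T (fun s => X s i j) t ((A t * X t) i j)) ∧
      (∀ s ∈ T, ∀ t ∈ T, tsSigma T s ≤ t →
        matNorm (X t * P * (X (tsSigma T s))⁻¹) ≤ K * eOminus T α t (tsSigma T s)) ∧
      (∀ s ∈ T, ∀ t ∈ T, t ≤ tsSigma T s →
        matNorm (X t * (1 - P) * (X (tsSigma T s))⁻¹) ≤ K * eOminus T α (tsSigma T s) t)

/-- `x` is a bounded continuous solution on `T` of `x^Δ(t) = A(t) x(t) + F(t)`. -/
def IsLinBddSol {n : ℕ} (T : Set ℝ) (A : ℝ → Matrix (Fin n) (Fin n) ℝ)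
    (F x : ℝ → Fin n → ℝ) : Prop :=
  BCfun T x ∧ ∀ t ∈ T, deltaDeriv T x t ((A t).mulVec (x t) + F t)

/-- `x` is a (continuous, Δ-differentiable) solution of the delayed cellular neural network
on the set `S ⊆ T`. -/
def IsCNNSol {n : ℕ} (T S : Set ℝ) (c : Fin n → ℝ → ℝ) (a b : Fin n → Fin n → ℝ → ℝ)
    (f : Fin n → ℝ → ℝ) (γ : Fin n → Fin n → ℝ) (I : Fin n → ℝ → ℝ)
    (x : ℝ → Fin n → ℝ) : Prop :=
  ContinuousOn x T ∧
  ∀ t ∈ S, ∀ i, deltaDeriv T (fun s => x s i) t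
    (-(c i t) * x t i + (∑ j, a i j t * f j (x t j)) +
      (∑ j, b i j t * f j (x (t - γ i j) j)) + I i t)

end

noncomputable section AuxPAP
open Classical

variable {T : Set ℝ} {E : Type*} [NormedAddCommGroup E]

lemma tsPi_zero : (0:ℝ) ∈ tsPi T :=
  fun t ht => ⟨by simpa using ht, by simpa using ht⟩

lemma tsPi_neg {τ : ℝ} (h : τ ∈ tsPi T) : -τ ∈ tsPi T := by
  intro t ht
  constructor
  · rw [← sub_eq_add_neg]; exact (h t ht).2
  · rw [sub_neg_eq_add]; exact (h t ht).1

lemma tsPi_add {a b : ℝ} (ha : a ∈ tsPi T) (hb : b ∈ tsPi T) : a + b ∈ tsPi T := by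
  intro t ht
  constructor
  · rw [← add_assoc]; exact (hb _ ((ha t ht).1)).1
  · rw [sub_add_eq_sub_sub]; exact (hb _ ((ha t ht).2)).2

lemma tsPi_sub {a b : ℝ} (ha : a ∈ tsPi T) (hb : b ∈ tsPi T) : a - b ∈ tsPi T := by
  rw [sub_eq_add_neg]; exact tsPi_add ha (tsPi_neg hb)

lemma tsPi_natCast_mul {τ : ℝ} (h : τ ∈ tsPi T) (n : ℕ) : (n:ℝ) * τ ∈ tsPi T := by
  induction n with
  | zero => simpa using (tsPi_zero (T := T))
  | succ n ih => push_cast; rw [add_mul, one_mul]; exact tsPi_add ih h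

lemma tsPi_intCast_mul {τ : ℝ} (h : τ ∈ tsPi T) (k : ℤ) : (k:ℝ) * τ ∈ tsPi T := by
  rcases Int.eq_nat_or_neg k with ⟨n, rfl | rfl⟩
  · exact_mod_cast tsPi_natCast_mul h n
  · push_cast
    rw [neg_mul]
    exact tsPi_neg (tsPi_natCast_mul h n)

lemma exists_tsPi_mem_Icc {τ₀ : ℝ} (hPi : τ₀ ∈ tsPi T) (h0 : 0 < τ₀) (x : ℝ) :
    ∃ α, α ∈ tsPi T ∧ α ∈ Icc x (x + τ₀) := by
  refine ⟨(⌈x / τ₀⌉ : ℝ) * τ₀, tsPi_intCast_mul hPi _, ?_, ?_⟩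
  · rw [← div_le_iff₀ h0]
    exact Int.le_ceil _
  · have h1 : (⌈x / τ₀⌉ : ℝ) ≤ x / τ₀ + 1 := (Int.ceil_lt_add_one _).le
    have h2 := mul_le_mul_of_nonneg_right h1 h0.le
    have h3 : (x / τ₀ + 1) * τ₀ = x + τ₀ := by field_simp
    linarith

lemma tsPi_finite_net (T : Set ℝ) (l δ : ℝ) (hδ : 0 < δ) :
    ∃ R : Finset ℝ, R.Nonempty ∧ (∀ r ∈ R, r ∈ tsPi T) ∧
      ∀ ρ ∈ tsPi T, ρ ∈ Icc 0 l → ∃ r ∈ R, |ρ - r| ≤ δ := by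
  classical
  set N : ℕ := (⌈l / δ⌉).toNat + 1 with hN
  have hpickex : ∀ k : ℕ, ∃ y, y ∈ tsPi T ∧
      ((∃ z, z ∈ tsPi T ∧ z ∈ Icc ((k:ℝ) * δ) ((k:ℝ) * δ + δ)) →
        y ∈ Icc ((k:ℝ) * δ) ((k:ℝ) * δ + δ)) := by
    intro k
    by_cases h : ∃ z, z ∈ tsPi T ∧ z ∈ Icc ((k:ℝ) * δ) ((k:ℝ) * δ + δ)
    · obtain ⟨z, hz1, hz2⟩ := h
      exact ⟨z, hz1, fun _ => hz2⟩
    · exact ⟨0, tsPi_zero, fun hh => absurd hh h⟩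
  choose pick hpick1 hpick2 using hpickex
  refine ⟨(Finset.range N).image pick, ?_, ?_, ?_⟩
  · exact (Finset.nonempty_range_iff.2 (Nat.succ_ne_zero _)).image _
  · intro r hr
    obtain ⟨k, _, rfl⟩ := Finset.mem_image.1 hr
    exact hpick1 k
  · intro ρ hrhoPi hrhoI
    obtain ⟨hρ0, hρl⟩ := hrhoI
    set k : ℕ := (⌊ρ / δ⌋).toNat with hk
    have hkfl : ((k:ℕ):ℝ) = ((⌊ρ / δ⌋ : ℤ) : ℝ) := by
      exact_mod_cast congrArg (fun z : ℤ => (z : ℝ)) (Int.toNat_of_nonneg (Int.floor_nonneg.2 (by positivity)))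
    have hk1 : (k:ℝ) * δ ≤ ρ := by
      rw [← le_div_iff₀ hδ, hkfl]
      exact Int.floor_le _
    have hk2 : ρ ≤ (k:ℝ) * δ + δ := by
      have h3 : ρ / δ < (⌊ρ / δ⌋ : ℝ) + 1 := Int.lt_floor_add_one _
      rw [← hkfl] at h3
      have h4 := mul_lt_mul_of_pos_right h3 hδ
      have h5 : ρ / δ * δ = ρ := by field_simp
      nlinarith
    have hmem : ∃ z, z ∈ tsPi T ∧ z ∈ Icc ((k:ℝ) * δ) ((k:ℝ) * δ + δ) := ⟨ρ, hrhoPi, hk1, hk2⟩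
    have hkN : k < N := by
      have h5 : (⌊ρ / δ⌋ : ℤ) ≤ ⌈l / δ⌉ := by
        calc (⌊ρ / δ⌋ : ℤ) ≤ ⌈ρ / δ⌉ := Int.floor_le_ceil _
        _ ≤ ⌈l / δ⌉ := Int.ceil_le_ceil (by gcongr)
      have h6 : k ≤ (⌈l / δ⌉).toNat := by
        rw [hk]; exact Int.toNat_le_toNat h5
      omega
    refine ⟨pick k, Finset.mem_image.2 ⟨k, Finset.mem_range.2 hkN, rfl⟩, ?_⟩
    have h7 := hpick2 k hmem
    rw [abs_sub_le_iff]
    exact ⟨by linarith [h7.1, h7.2], by linarith [h7.1, h7.2]⟩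

lemma APfun.bddOn (hTne : T.Nonempty) (hTc : IsClosed T) {f : ℝ → E}
    (hf : APfun T f) : ∃ C : ℝ, 0 ≤ C ∧ ∀ t ∈ T, ‖f t‖ ≤ C := by
  obtain ⟨l, hl, H⟩ := hf.2 1 one_pos
  have hK : IsCompact (T ∩ Icc 0 l) := isCompact_Icc.inter_left hTc
  obtain ⟨t₀, ht₀⟩ := hTne
  obtain ⟨τ, hτPi, hτI, hτe⟩ := H (-t₀)
  have hmem₀ : t₀ + τ ∈ T ∩ Icc 0 l :=
    ⟨(hτPi t₀ ht₀).1, ⟨by linarith [hτI.1], by linarith [hτI.2]⟩⟩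
  obtain ⟨x₀, hx₀K, hx₀max⟩ := hK.exists_isMaxOn ⟨_, hmem₀⟩ ((hf.1.mono inter_subset_left).norm)
  refine ⟨‖f x₀‖ + 1, by positivity, fun t ht => ?_⟩
  obtain ⟨τ, hτPi, hτI, hτe⟩ := H (-t)
  have h1 : t + τ ∈ T ∩ Icc 0 l :=
    ⟨(hτPi t ht).1, ⟨by linarith [hτI.1], by linarith [hτI.2]⟩⟩
  have h2 := hτe t ht
  have h4 := hx₀max h1
  have h3 : ‖f t‖ - ‖f (t + τ)‖ ≤ ‖f (t + τ) - f t‖ := by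
    rw [norm_sub_rev]; exact norm_sub_norm_le _ _
  simp only [Set.mem_setOf_eq] at h4
  linarith

lemma APfun.unifCont (hTc : IsClosed T) {f : ℝ → E} (hf : APfun T f) {ε : ℝ} (hε : 0 < ε) :
    ∃ δ > 0, ∀ s ∈ T, ∀ t ∈ T, |s - t| ≤ δ → ‖f s - f t‖ ≤ ε := by
  obtain ⟨l, hl, H⟩ := hf.2 (ε/3) (by linarith)
  have hK : IsCompact (T ∩ Icc (-1) (l+1)) := isCompact_Icc.inter_left hTc
  have hUC := hK.uniformContinuousOn_of_continuous (hf.1.mono inter_subset_left)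
  rw [Metric.uniformContinuousOn_iff] at hUC
  obtain ⟨δ₁, hδ₁, hδ⟩ := hUC (ε/3) (by linarith)
  refine ⟨min (δ₁/2) 1, by positivity, fun s hs t ht hst => ?_⟩
  obtain ⟨τ, hτPi, hτI, hτe⟩ := H (-t)
  have hstδ : |s - t| ≤ δ₁/2 := le_trans hst (min_le_left _ _)
  have hst1 : |s - t| ≤ 1 := le_trans hst (min_le_right _ _)
  have habs := abs_le.1 hst1
  have htK : t + τ ∈ T ∩ Icc (-1) (l+1) :=
    ⟨(hτPi t ht).1, ⟨by linarith [hτI.1], by linarith [hτI.2]⟩⟩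
  have hsK : s + τ ∈ T ∩ Icc (-1) (l+1) :=
    ⟨(hτPi s hs).1, ⟨by linarith [hτI.1], by linarith [hτI.2]⟩⟩
  have hdist : dist (s + τ) (t + τ) < δ₁ := by
    rw [Real.dist_eq]
    have : s + τ - (t + τ) = s - t := by ring
    rw [this]
    linarith [lt_of_le_of_lt hstδ (by linarith : δ₁/2 < δ₁)]
  have hmid := hδ _ hsK _ htK hdist
  rw [dist_eq_norm] at hmid
  have h1 := hτe s hs
  have h2 := hτe t ht
  have hdec : f s - f t = (f s - f (s + τ)) + (f (s + τ) - f (t + τ)) + (f (t + τ) - f t) := by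
    abel
  calc ‖f s - f t‖ ≤ ‖f s - f (s + τ)‖ + ‖f (s + τ) - f (t + τ)‖ + ‖f (t + τ) - f t‖ := by
        rw [hdec]; exact norm_add₃_le
  _ ≤ ε := by
        rw [norm_sub_rev (f s)]
        linarith

/-- Common ε-translation numbers for two almost periodic functions: the heart of the
closure of `APfun` under addition/subtraction. -/
lemma APfun.common (hTc : IsClosed T) {τ₁ : ℝ} (hτ₁Pi : τ₁ ∈ tsPi T) (hτ₁0 : τ₁ ≠ 0)
    {f g : ℝ → E} (hf : APfun T f) (hg : APfun T g) {ε : ℝ} (hε : 0 < ε) :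
    ∃ l > 0, ∀ x : ℝ, ∃ τ ∈ tsPi T, τ ∈ Icc x (x + l) ∧
      (∀ t ∈ T, ‖f (t + τ) - f t‖ < ε) ∧ (∀ t ∈ T, ‖g (t + τ) - g t‖ < ε) := by
  classical
  -- a positive element of Π
  set τ₀ : ℝ := |τ₁| with hτ₀
  have hτ₀pos : 0 < τ₀ := abs_pos.2 hτ₁0
  have hτ₀Pi : τ₀ ∈ tsPi T := by
    rcases abs_choice τ₁ with h | h
    · rw [hτ₀, h]; exact hτ₁Pi
    · rw [hτ₀, h]; exact tsPi_neg hτ₁Pi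
  have hε8 : 0 < ε/8 := by linarith
  obtain ⟨lf, hlf, Hf⟩ := hf.2 (ε/8) hε8
  obtain ⟨lg, hlg, Hg⟩ := hg.2 (ε/8) hε8
  obtain ⟨δf, hδf, Uf⟩ := hf.unifCont hTc hε8
  obtain ⟨δg, hδg, Ug⟩ := hg.unifCont hTc hε8
  set δ : ℝ := min δf δg with hδdef
  have hδ : 0 < δ := lt_min hδf hδg
  obtain ⟨Rf, hRfne, hRfPi, hRfnet⟩ := tsPi_finite_net T lf δ hδ
  obtain ⟨Rg, hRgne, hRgPi, hRgnet⟩ := tsPi_finite_net T lg δ hδ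
  -- the "index" of a translation τ ∈ Π
  have step : ∀ τ : ℝ, ∃ pr : ℝ × ℝ, τ ∈ tsPi T →
      (pr.1 ∈ Rf ∧ pr.2 ∈ Rg ∧ pr.1 ∈ tsPi T ∧ pr.2 ∈ tsPi T ∧
        (∀ t ∈ T, ‖f (t + τ) - f (t + pr.1)‖ ≤ ε/4) ∧
        (∀ t ∈ T, ‖g (t + τ) - g (t + pr.2)‖ ≤ ε/4)) := by
    intro τ
    by_cases hτ : τ ∈ tsPi T
    · obtain ⟨s, hsPi, hsI, hse⟩ := Hf (τ - lf)
      have hρPi : τ - s ∈ tsPi T := tsPi_sub hτ hsPi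
      have hρI : τ - s ∈ Icc 0 lf := ⟨by linarith [hsI.2], by linarith [hsI.1]⟩
      obtain ⟨rf, hrfR, hrfδ⟩ := hRfnet _ hρPi hρI
      obtain ⟨s', hs'Pi, hs'I, hs'e⟩ := Hg (τ - lg)
      have hρ'Pi : τ - s' ∈ tsPi T := tsPi_sub hτ hs'Pi
      have hρ'I : τ - s' ∈ Icc 0 lg := ⟨by linarith [hs'I.2], by linarith [hs'I.1]⟩
      obtain ⟨rg, hrgR, hrgδ⟩ := hRgnet _ hρ'Pi hρ'I
      refine ⟨(rf, rg), fun _ => ⟨hrfR, hrgR, hRfPi _ hrfR, hRgPi _ hrgR, ?_, ?_⟩⟩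
      · intro t ht
        have htρ : t + (τ - s) ∈ T := (hρPi t ht).1
        have htrf : t + rf ∈ T := (hRfPi _ hrfR t ht).1
        have e1 : ‖f ((t + (τ - s)) + s) - f (t + (τ - s))‖ < ε/8 := hse _ htρ
        have e2 : ‖f (t + (τ - s)) - f (t + rf)‖ ≤ ε/8 := by
          refine Uf _ htρ _ htrf ?_
          have : t + (τ - s) - (t + rf) = (τ - s) - rf := by ring
          rw [this]
          exact le_trans hrfδ (min_le_left _ _)
        have e3 : t + (τ - s) + s = t + τ := by ring
        rw [e3] at e1
        calc ‖f (t + τ) - f (t + rf)‖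
            ≤ ‖f (t + τ) - f (t + (τ - s))‖ + ‖f (t + (τ - s)) - f (t + rf)‖ := by
              have : f (t + τ) - f (t + rf)
                  = (f (t + τ) - f (t + (τ - s))) + (f (t + (τ - s)) - f (t + rf)) := by abel
              rw [this]; exact norm_add_le _ _
        _ ≤ ε/4 := by linarith
      · intro t ht
        have htρ : t + (τ - s') ∈ T := (hρ'Pi t ht).1
        have htrg : t + rg ∈ T := (hRgPi _ hrgR t ht).1
        have e1 : ‖g ((t + (τ - s')) + s') - g (t + (τ - s'))‖ < ε/8 := hs'e _ htρ
        have e2 : ‖g (t + (τ - s')) - g (t + rg)‖ ≤ ε/8 := by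
          refine Ug _ htρ _ htrg ?_
          have : t + (τ - s') - (t + rg) = (τ - s') - rg := by ring
          rw [this]
          exact le_trans hrgδ (min_le_right _ _)
        have e3 : t + (τ - s') + s' = t + τ := by ring
        rw [e3] at e1
        calc ‖g (t + τ) - g (t + rg)‖
            ≤ ‖g (t + τ) - g (t + (τ - s'))‖ + ‖g (t + (τ - s')) - g (t + rg)‖ := by
              have : g (t + τ) - g (t + rg)
                  = (g (t + τ) - g (t + (τ - s'))) + (g (t + (τ - s')) - g (t + rg)) := by abel
              rw [this]; exact norm_add_le _ _
        _ ≤ ε/4 := by linarith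
    · exact ⟨(0, 0), fun h => absurd h hτ⟩
  choose idx hidx using step
  -- representatives of the (finitely many) classes
  have hrepex : ∀ ab : ℝ × ℝ, ∃ β : ℝ,
      (∃ τ, τ ∈ tsPi T ∧ idx τ = ab) → (β ∈ tsPi T ∧ idx β = ab) := by
    intro ab
    by_cases h : ∃ τ, τ ∈ tsPi T ∧ idx τ = ab
    · exact ⟨h.choose, fun _ => ⟨h.choose_spec.1, h.choose_spec.2⟩⟩
    · exact ⟨0, fun hh => absurd hh h⟩
  choose rep hrep using hrepex
  set RS : Finset (ℝ × ℝ) := Rf ×ˢ Rg with hRS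
  have hRSne : RS.Nonempty := hRfne.product hRgne
  set M : ℝ := (RS.image (fun ab => |rep ab|)).max' (hRSne.image _) with hM
  have hMba : ∀ ab ∈ RS, |rep ab| ≤ M := by
    intro ab hab
    rw [hM]
    exact Finset.le_max' _ _ (Finset.mem_image_of_mem (fun ab => |rep ab|) hab)
  have hM0 : 0 ≤ M := le_trans (abs_nonneg _) (hMba _ hRSne.choose_spec)
  refine ⟨2*M + τ₀, by linarith, fun x => ?_⟩
  obtain ⟨α, hαPi, hαI⟩ := exists_tsPi_mem_Icc hτ₀Pi hτ₀pos (x + M)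
  have hidxα := hidx α hαPi
  have hcl : ∃ τ, τ ∈ tsPi T ∧ idx τ = idx α := ⟨α, hαPi, rfl⟩
  obtain ⟨hβPi, hβidx⟩ := hrep _ hcl
  set β : ℝ := rep (idx α) with hβ
  have hidxβ := hidx β hβPi
  rw [hβidx] at hidxβ
  have hαRS : idx α ∈ RS := by
    rw [hRS]
    exact Finset.mem_product.2 ⟨hidxα.1, hidxα.2.1⟩
  have hβM : |β| ≤ M := hMba _ hαRS
  have habsβ := abs_le.1 hβM
  refine ⟨α - β, tsPi_sub hαPi hβPi, ⟨by linarith [hαI.1], by linarith [hαI.2]⟩, ?_, ?_⟩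
  · intro t ht
    have ht' : t - β ∈ T := (hβPi t ht).2
    have e1 := hidxα.2.2.2.2.1 _ ht'
    have e2 := hidxβ.2.2.2.2.1 _ ht'
    have e3 : t - β + α = t + (α - β) := by ring
    have e4 : t - β + β = t := by ring
    rw [e3] at e1
    rw [e4] at e2
    calc ‖f (t + (α - β)) - f t‖
        ≤ ‖f (t + (α - β)) - f (t - β + (idx α).1)‖ + ‖f t - f (t - β + (idx α).1)‖ := by
          have : f (t + (α - β)) - f t
              = (f (t + (α - β)) - f (t - β + (idx α).1)) - (f t - f (t - β + (idx α).1)) := by abel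
          rw [this]; exact norm_sub_le _ _
    _ < ε := by linarith
  · intro t ht
    have ht' : t - β ∈ T := (hβPi t ht).2
    have e1 := hidxα.2.2.2.2.2 _ ht'
    have e2 := hidxβ.2.2.2.2.2 _ ht'
    have e3 : t - β + α = t + (α - β) := by ring
    have e4 : t - β + β = t := by ring
    rw [e3] at e1
    rw [e4] at e2
    calc ‖g (t + (α - β)) - g t‖
        ≤ ‖g (t + (α - β)) - g (t - β + (idx α).2)‖ + ‖g t - g (t - β + (idx α).2)‖ := by
          have : g (t + (α - β)) - g t
              = (g (t + (α - β)) - g (t - β + (idx α).2)) - (g t - g (t - β + (idx α).2)) := by abel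
          rw [this]; exact norm_sub_le _ _
    _ < ε := by linarith

lemma APfun.zero {τ₁ : ℝ} (hτ₁Pi : τ₁ ∈ tsPi T) (hτ₁0 : τ₁ ≠ 0) :
    APfun T (fun _ : ℝ => (0:E)) := by
  refine ⟨continuousOn_const, fun ε hε => ?_⟩
  have hτ₀pos : 0 < |τ₁| := abs_pos.2 hτ₁0
  have hτ₀Pi : |τ₁| ∈ tsPi T := by
    rcases abs_choice τ₁ with h | h
    · rw [h]; exact hτ₁Pi
    · rw [h]; exact tsPi_neg hτ₁Pi
  refine ⟨|τ₁|, hτ₀pos, fun x => ?_⟩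
  obtain ⟨α, hαPi, hαI⟩ := exists_tsPi_mem_Icc hτ₀Pi hτ₀pos x
  exact ⟨α, hαPi, hαI, fun t _ => by simpa using hε⟩

lemma APfun.add (hTc : IsClosed T) {τ₁ : ℝ} (hτ₁Pi : τ₁ ∈ tsPi T) (hτ₁0 : τ₁ ≠ 0)
    {f g : ℝ → E} (hf : APfun T f) (hg : APfun T g) :
    APfun T (fun t => f t + g t) := by
  refine ⟨hf.1.add hg.1, fun ε hε => ?_⟩
  obtain ⟨l, hl, H⟩ := hf.common hTc hτ₁Pi hτ₁0 hg (by linarith : (0:ℝ) < ε/2)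
  refine ⟨l, hl, fun x => ?_⟩
  obtain ⟨τ, hτPi, hτI, h1, h2⟩ := H x
  refine ⟨τ, hτPi, hτI, fun t ht => ?_⟩
  have : f (t + τ) + g (t + τ) - (f t + g t) = (f (t + τ) - f t) + (g (t + τ) - g t) := by abel
  rw [this]
  calc ‖(f (t + τ) - f t) + (g (t + τ) - g t)‖ ≤ ‖f (t + τ) - f t‖ + ‖g (t + τ) - g t‖ :=
        norm_add_le _ _
  _ < ε := by linarith [h1 t ht, h2 t ht]

lemma APfun.sub (hTc : IsClosed T) {τ₁ : ℝ} (hτ₁Pi : τ₁ ∈ tsPi T) (hτ₁0 : τ₁ ≠ 0)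
    {f g : ℝ → E} (hf : APfun T f) (hg : APfun T g) :
    APfun T (fun t => f t - g t) := by
  refine ⟨hf.1.sub hg.1, fun ε hε => ?_⟩
  obtain ⟨l, hl, H⟩ := hf.common hTc hτ₁Pi hτ₁0 hg (by linarith : (0:ℝ) < ε/2)
  refine ⟨l, hl, fun x => ?_⟩
  obtain ⟨τ, hτPi, hτI, h1, h2⟩ := H x
  refine ⟨τ, hτPi, hτI, fun t ht => ?_⟩
  have : f (t + τ) - g (t + τ) - (f t - g t) = (f (t + τ) - f t) - (g (t + τ) - g t) := by abel
  rw [this]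
  calc ‖(f (t + τ) - f t) - (g (t + τ) - g t)‖ ≤ ‖f (t + τ) - f t‖ + ‖g (t + τ) - g t‖ :=
        norm_sub_le _ _
  _ < ε := by linarith [h1 t ht, h2 t ht]

/-- Composition with a continuous map, on a proper space (uniform continuity on balls). -/
lemma APfun.comp [NormedSpace ℝ E] [ProperSpace E] {θ : E → E} (hθ : Continuous θ)
    {h : ℝ → E} (hap : APfun T h) {R : ℝ} (hR : ∀ t ∈ T, ‖h t‖ ≤ R) :
    APfun T (fun t => θ (h t)) := by
  refine ⟨hθ.comp_continuousOn hap.1, fun ε hε => ?_⟩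
  have hcpt : IsCompact (Metric.closedBall (0:E) R) := isCompact_closedBall _ _
  have hUC := hcpt.uniformContinuousOn_of_continuous hθ.continuousOn
  rw [Metric.uniformContinuousOn_iff] at hUC
  obtain ⟨δ, hδ, hUCδ⟩ := hUC ε hε
  obtain ⟨l, hl, H⟩ := hap.2 (δ/2) (by linarith)
  refine ⟨l, hl, fun x => ?_⟩
  obtain ⟨τ, hτPi, hτI, he⟩ := H x
  refine ⟨τ, hτPi, hτI, fun t ht => ?_⟩
  have h1 : h (t + τ) ∈ Metric.closedBall (0:E) R := by
    rw [Metric.mem_closedBall, dist_zero_right]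
    exact hR _ (hτPi t ht).1
  have h2 : h t ∈ Metric.closedBall (0:E) R := by
    rw [Metric.mem_closedBall, dist_zero_right]
    exact hR _ ht
  have h3 : dist (h (t + τ)) (h t) < δ := by
    rw [dist_eq_norm]
    linarith [he t ht]
  have := hUCδ _ h1 _ h2 h3
  rwa [dist_eq_norm] at this

/-- `APfun` is closed under uniform approximation on `T`. -/
lemma APfun.ofApprox {p : ℝ → E} (hc : ContinuousOn p T)
    (happ : ∀ ε > 0, ∃ q : ℝ → E, APfun T q ∧ ∀ t ∈ T, ‖p t - q t‖ ≤ ε) :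
    APfun T p := by
  refine ⟨hc, fun ε hε => ?_⟩
  obtain ⟨q, hq, hqe⟩ := happ (ε/4) (by linarith)
  obtain ⟨l, hl, H⟩ := hq.2 (ε/4) (by linarith)
  refine ⟨l, hl, fun x => ?_⟩
  obtain ⟨τ, hτPi, hτI, he⟩ := H x
  refine ⟨τ, hτPi, hτI, fun t ht => ?_⟩
  have h1 := hqe _ (hτPi t ht).1
  have h2 := hqe t ht
  have h3 := he t ht
  have hdec : p (t + τ) - p t
      = (p (t + τ) - q (t + τ)) + (q (t + τ) - q t) - (p t - q t) := by abel
  calc ‖p (t + τ) - p t‖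
      ≤ ‖(p (t + τ) - q (t + τ)) + (q (t + τ) - q t)‖ + ‖p t - q t‖ := by
        rw [hdec]; exact norm_sub_le _ _
  _ ≤ ‖p (t + τ) - q (t + τ)‖ + ‖q (t + τ) - q t‖ + ‖p t - q t‖ := by
        linarith [norm_add_le (p (t + τ) - q (t + τ)) (q (t + τ) - q t)]
  _ < ε := by linarith

variable [NormedSpace ℝ E]

/-- Radial soft-thresholding at level `c`. -/
def thresh (c : ℝ) (v : E) : E := (max 0 (‖v‖ - c) / max c ‖v‖) • v

lemma thresh_continuous {c : ℝ} (hc : 0 < c) : Continuous (thresh (E := E) c) := by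
  apply Continuous.smul ?_ continuous_id
  refine Continuous.div ?_ ?_ ?_
  · exact continuous_const.max (continuous_norm.sub continuous_const)
  · exact continuous_const.max continuous_norm
  · intro v
    have : (0:ℝ) < max c ‖v‖ := lt_of_lt_of_le hc (le_max_left _ _)
    exact ne_of_gt this

lemma thresh_dist_le {c : ℝ} (hc : 0 < c) (v : E) : ‖v - thresh c v‖ ≤ c := by
  rcases le_or_gt ‖v‖ c with h | h
  · have h0 : max 0 (‖v‖ - c) = 0 := max_eq_left (by linarith)
    have : thresh c v = 0 := by rw [thresh, h0]; simp
    rw [this, sub_zero]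
    exact h
  · have h0 : max 0 (‖v‖ - c) = ‖v‖ - c := max_eq_right (by linarith)
    have h1 : max c ‖v‖ = ‖v‖ := max_eq_right h.le
    have hv : ‖v‖ ≠ 0 := ne_of_gt (lt_trans hc h)
    have : v - thresh c v = (1 - (‖v‖ - c) / ‖v‖) • v := by
      rw [thresh, h0, h1, sub_smul, one_smul]
    rw [this, norm_smul, Real.norm_eq_abs]
    have h2 : 1 - (‖v‖ - c) / ‖v‖ = c / ‖v‖ := by field_simp; ring
    rw [h2, abs_of_nonneg (by positivity)]
    rw [div_mul_cancel₀ _ hv]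

lemma thresh_norm_le {c : ℝ} (hc : 0 < c) {v w : E} (hvw : ‖v - w‖ ≤ c) :
    ‖thresh c v‖ ≤ ‖w‖ := by
  rcases le_or_gt ‖v‖ c with h | h
  · have h0 : max 0 (‖v‖ - c) = 0 := max_eq_left (by linarith)
    have : thresh c v = 0 := by rw [thresh, h0]; simp
    rw [this, norm_zero]
    exact norm_nonneg _
  · have h0 : max 0 (‖v‖ - c) = ‖v‖ - c := max_eq_right (by linarith)
    have h1 : max c ‖v‖ = ‖v‖ := max_eq_right h.le
    have hv : ‖v‖ ≠ 0 := ne_of_gt (lt_trans hc h)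
    rw [thresh, h0, h1, norm_smul, Real.norm_eq_abs,
      abs_of_nonneg (div_nonneg (by linarith) (norm_nonneg _)), div_mul_cancel₀ _ hv]
    have h3 : ‖v‖ - ‖w‖ ≤ ‖v - w‖ := norm_sub_norm_le _ _
    linarith

section Meas

lemma Qr_measurableSet (hTc : IsClosed T) (r : ℝ) : MeasurableSet (Qr T r) :=
  measurableSet_Icc.inter hTc.measurableSet

lemma Qr_subset (r : ℝ) : Qr T r ⊆ T := inter_subset_right

variable {u : ℝ → ℝ}

lemma integrableOn_weight
    (hu3 : ∀ s : Set ℝ, Bornology.IsBounded s → IntegrableOn u (s ∩ T) (deltaMeasure T))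
    (r : ℝ) : IntegrableOn u (Qr T r) (deltaMeasure T) :=
  hu3 _ (Metric.isBounded_Icc _ _)

lemma integrableOn_normMul (hTc : IsClosed T) (hupos : ∀ t ∈ T, 0 < u t)
    (hum : Measurable u)
    (hu3 : ∀ s : Set ℝ, Bornology.IsBounded s → IntegrableOn u (s ∩ T) (deltaMeasure T))
    {q : ℝ → E} (hqc : ContinuousOn q T) {C : ℝ} (hqb : ∀ t ∈ T, ‖q t‖ ≤ C) (r : ℝ) :
    IntegrableOn (fun t => ‖q t‖ * u t) (Qr T r) (deltaMeasure T) := by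
  have hQ := Qr_measurableSet (T := T) hTc r
  have hint : IntegrableOn (fun t => max C 0 * u t) (Qr T r) (deltaMeasure T) :=
    (integrableOn_weight (T := T) hu3 r).const_mul _
  refine Integrable.mono' hint ?_ ?_
  · exact (((hqc.mono (Qr_subset (T := T) r)).norm).aestronglyMeasurable hQ).mul
      hum.aestronglyMeasurable
  · filter_upwards [ae_restrict_mem hQ] with t ht
    have htT : t ∈ T := (Qr_subset (T := T) r) ht
    have hu0 : 0 ≤ u t := (hupos t htT).le
    rw [Real.norm_eq_abs, abs_of_nonneg (mul_nonneg (norm_nonneg _) hu0)]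
    exact mul_le_mul_of_nonneg_right ((hqb t htT).trans (le_max_left _ _)) hu0

lemma A_nonneg (hTc : IsClosed T) (hupos : ∀ t ∈ T, 0 < u t) (q : ℝ → E) {r : ℝ}
    (hr : 0 < uQ T u r) :
    0 ≤ (uQ T u r)⁻¹ * ∫ t in Qr T r, ‖q t‖ * u t ∂(deltaMeasure T) := by
  refine mul_nonneg (inv_nonneg.2 hr.le) ?_
  refine setIntegral_nonneg (Qr_measurableSet (T := T) hTc r) (fun t ht => ?_)
  exact mul_nonneg (norm_nonneg _) (hupos t ((Qr_subset (T := T) r) ht)).le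

set_option linter.unusedSectionVars false in
/-- Master estimate: if on `T` we have `‖q‖ ≤ C + ∑ᵢ ‖Qf i‖` pointwise, then the weighted
ergodic averages satisfy the corresponding inequality. -/
lemma A_master (hTc : IsClosed T) (hupos : ∀ t ∈ T, 0 < u t) (hum : Measurable u)
    (hu3 : ∀ s : Set ℝ, Bornology.IsBounded s → IntegrableOn u (s ∩ T) (deltaMeasure T))
    {s : Finset ℕ} {Qf : ℕ → ℝ → E} (hQfc : ∀ i ∈ s, ContinuousOn (Qf i) T)
    {CQ : ℕ → ℝ} (hQfb : ∀ i ∈ s, ∀ t ∈ T, ‖Qf i t‖ ≤ CQ i)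
    {q : ℝ → E} (hqc : ContinuousOn q T) {Cq : ℝ} (hqb : ∀ t ∈ T, ‖q t‖ ≤ Cq)
    {C : ℝ} (hC : 0 ≤ C) (hpt : ∀ t ∈ T, ‖q t‖ ≤ C + ∑ i ∈ s, ‖Qf i t‖)
    {r : ℝ} (hr : 1 ≤ uQ T u r) :
    (uQ T u r)⁻¹ * ∫ t in Qr T r, ‖q t‖ * u t ∂(deltaMeasure T) ≤
      C + ∑ i ∈ s, (uQ T u r)⁻¹ * ∫ t in Qr T r, ‖Qf i t‖ * u t ∂(deltaMeasure T) := by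
  have hQ := Qr_measurableSet (T := T) hTc r
  have huQ : (0:ℝ) < uQ T u r := lt_of_lt_of_le one_pos hr
  have hIq : IntegrableOn (fun t => ‖q t‖ * u t) (Qr T r) (deltaMeasure T) :=
    integrableOn_normMul hTc hupos hum hu3 hqc hqb r
  have hIi : ∀ i ∈ s, IntegrableOn (fun t => ‖Qf i t‖ * u t) (Qr T r) (deltaMeasure T) :=
    fun i hi => integrableOn_normMul hTc hupos hum hu3 (hQfc i hi) (hQfb i hi) r
  have hIc : IntegrableOn (fun t => C * u t) (Qr T r) (deltaMeasure T) :=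
    (integrableOn_weight (T := T) hu3 r).const_mul _
  have hIsum : IntegrableOn (fun t => ∑ i ∈ s, ‖Qf i t‖ * u t) (Qr T r) (deltaMeasure T) :=
    integrable_finset_sum s hIi
  have hIS : IntegrableOn (fun t => C * u t + ∑ i ∈ s, ‖Qf i t‖ * u t) (Qr T r)
      (deltaMeasure T) := hIc.add hIsum
  have step1 : ∫ t in Qr T r, ‖q t‖ * u t ∂(deltaMeasure T) ≤
      ∫ t in Qr T r, (C * u t + ∑ i ∈ s, ‖Qf i t‖ * u t) ∂(deltaMeasure T) := by
    refine setIntegral_mono_on hIq hIS hQ (fun t ht => ?_)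
    have htT : t ∈ T := (Qr_subset (T := T) r) ht
    have hu0 : 0 ≤ u t := (hupos t htT).le
    have h1 : ‖q t‖ * u t ≤ (C + ∑ i ∈ s, ‖Qf i t‖) * u t :=
      mul_le_mul_of_nonneg_right (hpt t htT) hu0
    calc ‖q t‖ * u t ≤ (C + ∑ i ∈ s, ‖Qf i t‖) * u t := h1
    _ = C * u t + ∑ i ∈ s, ‖Qf i t‖ * u t := by rw [add_mul, Finset.sum_mul]
  have step2 : ∫ t in Qr T r, (C * u t + ∑ i ∈ s, ‖Qf i t‖ * u t) ∂(deltaMeasure T)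
      = C * uQ T u r + ∑ i ∈ s, ∫ t in Qr T r, ‖Qf i t‖ * u t ∂(deltaMeasure T) := by
    rw [integral_add hIc hIsum, integral_finset_sum s hIi, integral_const_mul]
    rfl
  have step3 : (uQ T u r)⁻¹ * ∫ t in Qr T r, ‖q t‖ * u t ∂(deltaMeasure T) ≤
      (uQ T u r)⁻¹ * (C * uQ T u r + ∑ i ∈ s, ∫ t in Qr T r, ‖Qf i t‖ * u t ∂(deltaMeasure T)) := by
    refine mul_le_mul_of_nonneg_left ?_ (inv_nonneg.2 huQ.le)
    rw [← step2]
    exact step1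
  refine step3.trans_eq ?_
  rw [mul_add, Finset.mul_sum]
  congr 1
  field_simp

end Meas

end AuxPAP

/-- If a sequence `(f_m) ⊆ PAP(T,ℝⁿ,u)` (with `u ∈ U_∞^Inv`) converges uniformly on `T` to `f`,
i.e. `‖f_m − f‖_∞ → 0`, then `f ∈ PAP(T,ℝⁿ,u)`. -/
theorem pap_closed_under_uniform_limits {n : ℕ} (T : Set ℝ) (hT : APTimeScale T)
    (u : ℝ → ℝ) (hu : UInftyInv T u)
    (f : ℕ → ℝ → Fin n → ℝ) (g : ℝ → Fin n → ℝ)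
    (hfm : ∀ m, PAPfun T u (f m))
    (hconv : ∀ ε > 0, ∃ N : ℕ, ∀ m ≥ N, ∀ t ∈ T, ‖f m t - g t‖ ≤ ε) :
    PAPfun T u g := by
  classical
  obtain ⟨hTne, hTc, τ₁, hτ₁Pi, hτ₁0⟩ := hT
  obtain ⟨⟨hum, hupos, hu3, _, huQtop⟩, -⟩ := hu
  choose P Q hP hQ hPQ using hfm
  have hQb : ∀ k, ∃ C, ∀ t ∈ T, ‖Q k t‖ ≤ C := fun k => (hQ k).1.2
  choose CQ hCQ using hQb
  -- select a subsequence converging at geometric speed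
  have hsel : ∀ j : ℕ, ∃ N : ℕ, ∀ k ≥ N, ∀ t ∈ T, ‖f k t - g t‖ ≤ (1/2:ℝ)^j / 4 :=
    fun j => hconv _ (by positivity)
  choose m hm using hsel
  have hmj : ∀ j, ∀ t ∈ T, ‖f (m j) t - g t‖ ≤ (1/2:ℝ)^j / 4 := fun j => hm j (m j) le_rfl
  set c : ℕ → ℝ := fun j => (1/2:ℝ)^j / 2 with hc
  have hcpos : ∀ j, 0 < c j := fun j => by rw [hc]; positivity
  set z : ℕ → ℝ → (Fin n → ℝ) := fun j t => P (m (j+1)) t - P (m j) t with hz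
  set y : ℕ → ℝ → (Fin n → ℝ) := fun j t => thresh (c j) (z j t) with hy
  set W : ℕ → ℝ → (Fin n → ℝ) := fun J t => ∑ i ∈ Finset.range J, y i t with hW
  set G : ℕ → ℝ → (Fin n → ℝ) := fun J t => P (m J) t - W J t with hG
  -- consecutive differences are small everywhere
  have hGstep : ∀ j t, ‖G (j+1) t - G j t‖ ≤ c j := by
    intro j t
    have hdiff : G (j+1) t - G j t = z j t - y j t := by
      simp only [hG, hW, hz, Finset.sum_range_succ, hy]
      abel
    rw [hdiff]
    simpa only [hy] using thresh_dist_le (hcpos j) (z j t)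
  -- the thresholded corrections are dominated by the PAP₀ parts on T
  have hzQ : ∀ j, ∀ t ∈ T, ‖z j t - (Q (m j) t - Q (m (j+1)) t)‖ ≤ c j := by
    intro j t ht
    have h1 := hPQ (m j) t ht
    have h2 := hPQ (m (j+1)) t ht
    have e : z j t - (Q (m j) t - Q (m (j+1)) t)
        = (f (m (j+1)) t - g t) - (f (m j) t - g t) := by
      simp only [hz]
      rw [h1, h2]
      abel
    rw [e]
    have h3 := hmj j t ht
    have h4 := hmj (j+1) t ht
    have h5 : (0:ℝ) ≤ (1/2:ℝ)^j := by positivity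
    have h6 : (1/2:ℝ)^(j+1) = (1/2:ℝ)^j * (1/2) := pow_succ _ _
    calc ‖(f (m (j+1)) t - g t) - (f (m j) t - g t)‖
        ≤ ‖f (m (j+1)) t - g t‖ + ‖f (m j) t - g t‖ := norm_sub_le _ _
    _ ≤ c j := by rw [hc]; dsimp only; linarith
  have hyQ : ∀ j, ∀ t ∈ T, ‖y j t‖ ≤ ‖Q (m j) t - Q (m (j+1)) t‖ := by
    intro j t ht
    simpa only [hy] using thresh_norm_le (hcpos j) (hzQ j t ht)
  -- almost periodicity of the partial corrections
  have hWap : ∀ J, APfun T (W J) := by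
    intro J
    induction J with
    | zero =>
      have h0 : W 0 = fun _ : ℝ => (0 : Fin n → ℝ) := by
        funext t; simp [hW]
      rw [h0]
      exact APfun.zero hτ₁Pi hτ₁0
    | succ J ih =>
      have h0 : W (J+1) = fun t => W J t + y J t := by
        funext t; simp [hW, Finset.sum_range_succ]
      rw [h0]
      refine APfun.add hTc hτ₁Pi hτ₁0 ih ?_
      have hzap : APfun T (z J) := by
        have := APfun.sub hTc hτ₁Pi hτ₁0 (hP (m (J+1))) (hP (m J))
        rw [hz]; exact this
      obtain ⟨R, _, hRb⟩ := hzap.bddOn hTne hTc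
      have := APfun.comp (thresh_continuous (hcpos J)) hzap hRb
      rw [hy]; exact this
  have hGap : ∀ J, APfun T (G J) := by
    intro J
    have := APfun.sub hTc hτ₁Pi hτ₁0 (hP (m J)) (hWap J)
    rw [hG]; exact this
  -- uniform convergence of G to its limit p
  have hcauchy : ∀ t, CauchySeq (fun J => G J t) := by
    intro t
    refine cauchySeq_of_le_geometric (1/2 : ℝ) 1 (by norm_num) (fun J => ?_)
    rw [dist_eq_norm, norm_sub_rev]
    refine (hGstep J t).trans ?_
    rw [hc]
    dsimp only
    have : (0:ℝ) ≤ (1/2:ℝ)^J := by positivity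
    linarith
  set p : ℝ → (Fin n → ℝ) := fun t => limUnder atTop (fun J => G J t) with hp
  have hplim : ∀ t, Tendsto (fun J => G J t) atTop (nhds (p t)) :=
    fun t => (hcauchy t).tendsto_limUnder
  have hGK : ∀ J K, J ≤ K → ∀ t, dist (G J t) (G K t) ≤ (1/2:ℝ)^J := by
    intro J K hJK t
    have h1 : dist (G J t) (G K t) ≤ ∑ i ∈ Finset.Ico J K, c i := by
      refine dist_le_Ico_sum_of_dist_le (f := fun i => G i t) (d := c) hJK (fun {k} _ _ => ?_)
      rw [dist_eq_norm, norm_sub_rev]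
      exact hGstep k t
    refine h1.trans ?_
    have h3 : ∑ i ∈ Finset.Ico J K, ((1:ℝ)/2)^i = ((1/2:ℝ)^K - (1/2)^J)/((1/2) - 1) :=
      geom_sum_Ico (by norm_num) hJK
    have h4 : ∑ i ∈ Finset.Ico J K, c i = (1/2 : ℝ) * ∑ i ∈ Finset.Ico J K, ((1:ℝ)/2)^i := by
      rw [Finset.mul_sum]
      refine Finset.sum_congr rfl (fun i _ => ?_)
      rw [hc]; ring
    have hK0 : (0:ℝ) ≤ (1/2:ℝ)^K := by positivity
    rw [h4, h3]
    have h5 : ((1/2:ℝ)^K - (1/2)^J)/((1/2) - 1) = 2*((1/2)^J - (1/2)^K) := by ring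
    rw [h5]
    linarith
  have hGp : ∀ (J : ℕ) (t : ℝ), dist (G J t) (p t) ≤ (1/2:ℝ)^J := by
    intro J t
    refine le_of_tendsto (tendsto_const_nhds.dist (hplim t)) ?_
    rw [eventually_atTop]
    exact ⟨J, fun K hK => hGK J K hK t⟩
  have htuo : TendstoUniformlyOn G p atTop T := by
    have hucauchy : UniformCauchySeqOn G atTop T := by
      rw [Metric.uniformCauchySeqOn_iff]
      intro ε hε
      obtain ⟨J₀, hJ₀⟩ := exists_pow_lt_of_lt_one hε (by norm_num : (1/2:ℝ) < 1)
      refine ⟨J₀, fun J hJ K hK t _ => ?_⟩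
      rcases le_total J K with h | h
      · exact lt_of_le_of_lt ((hGK J K h t).trans
          (pow_le_pow_of_le_one (by norm_num) (by norm_num) hJ)) hJ₀
      · rw [dist_comm]
        exact lt_of_le_of_lt ((hGK K J h t).trans
          (pow_le_pow_of_le_one (by norm_num) (by norm_num) hK)) hJ₀
    exact hucauchy.tendstoUniformlyOn_of_tendsto (fun t _ => hplim t)
  have hpc : ContinuousOn p T := htuo.continuousOn (Frequently.of_forall (fun J => (hGap J).1))
  -- p is almost periodic
  have hpap : APfun T p := by
    refine APfun.ofApprox hpc (fun ε hε => ?_)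
    obtain ⟨J₀, hJ₀⟩ := exists_pow_lt_of_lt_one hε (by norm_num : (1/2:ℝ) < 1)
    refine ⟨G J₀, hGap J₀, fun t _ => ?_⟩
    have := hGp J₀ t
    rw [dist_comm, dist_eq_norm] at this
    exact this.trans hJ₀.le
  -- bounds
  have hpb : ∃ Cp : ℝ, ∀ t ∈ T, ‖p t‖ ≤ Cp := by
    obtain ⟨CJ, _, hCJ⟩ := (hGap 0).bddOn hTne hTc
    refine ⟨CJ + 1, fun t ht => ?_⟩
    have h1 := hGp 0 t
    rw [dist_comm, dist_eq_norm] at h1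
    have h2 := hCJ t ht
    calc ‖p t‖ = ‖(p t - G 0 t) + G 0 t‖ := by rw [sub_add_cancel]
    _ ≤ ‖p t - G 0 t‖ + ‖G 0 t‖ := norm_add_le _ _
    _ ≤ CJ + 1 := by norm_num at h1; linarith
  obtain ⟨Cp, hCp⟩ := hpb
  have hgb : ∃ Cg : ℝ, ∀ t ∈ T, ‖g t‖ ≤ Cg := by
    obtain ⟨CP, _, hCP⟩ := (hP (m 0)).bddOn hTne hTc
    refine ⟨CP + CQ (m 0) + 1, fun t ht => ?_⟩
    have h1 := hmj 0 t ht
    have h2 := hPQ (m 0) t ht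
    have h3 : ‖g t‖ - ‖f (m 0) t‖ ≤ ‖f (m 0) t - g t‖ := by
      rw [norm_sub_rev]; exact norm_sub_norm_le _ _
    have h4 : ‖f (m 0) t‖ ≤ CP + CQ (m 0) := by
      rw [h2]
      exact (norm_add_le _ _).trans (add_le_add (hCP t ht) (hCQ (m 0) t ht))
    norm_num at h1
    linarith
  obtain ⟨Cg, hCg⟩ := hgb
  -- continuity of the limit g
  have hgc : ContinuousOn g T := by
    have htu : TendstoUniformlyOn (fun k => f k) g atTop T := by
      rw [Metric.tendstoUniformlyOn_iff]
      intro ε hε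
      obtain ⟨N, hN⟩ := hconv (ε/2) (by linarith)
      rw [eventually_atTop]
      refine ⟨N, fun k hk t ht => ?_⟩
      rw [dist_comm, dist_eq_norm]
      linarith [hN k hk t ht]
    refine htu.continuousOn (Frequently.of_forall (fun k => ?_))
    exact ((hP k).1.add (hQ k).1.1).congr (fun t ht => hPQ k t ht)
  -- the decomposition
  refine ⟨p, fun t => g t - p t, hpap, ⟨⟨hgc.sub hpc, ⟨Cg + Cp, fun t ht => ?_⟩⟩, ?_⟩,
    fun t ht => by simp⟩
  · exact (norm_sub_le _ _).trans (add_le_add (hCg t ht) (hCp t ht))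
  -- the ergodic condition for g - p
  have hev1 : ∀ᶠ r in alongPi T, 1 ≤ uQ T u r := huQtop.eventually_ge_atTop 1
  rw [Metric.tendsto_nhds]
  intro ε hε
  obtain ⟨J, hJ⟩ := exists_pow_lt_of_lt_one (show (0:ℝ) < ε/8 by linarith)
    (by norm_num : (1/2:ℝ) < 1)
  -- pointwise domination on T
  have hdom : ∀ t ∈ T, ‖g t - p t‖ ≤
      2*(1/2:ℝ)^J + ∑ i ∈ Finset.range (J+1), ‖(2:ℝ) • Q (m i) t‖ := by
    intro t ht
    have hsumy : ∑ i ∈ Finset.range J, ‖y i t‖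
        ≤ ∑ i ∈ Finset.range J, (‖Q (m i) t‖ + ‖Q (m (i+1)) t‖) := by
      refine Finset.sum_le_sum (fun i _ => ?_)
      exact (hyQ i t ht).trans (norm_sub_le _ _)
    have htele : ∑ i ∈ Finset.range J, (‖Q (m i) t‖ + ‖Q (m (i+1)) t‖) + ‖Q (m J) t‖
        ≤ 2 * ∑ i ∈ Finset.range (J+1), ‖Q (m i) t‖ := by
      have h1 : ∑ i ∈ Finset.range (J+1), ‖Q (m i) t‖
          = ∑ i ∈ Finset.range J, ‖Q (m i) t‖ + ‖Q (m J) t‖ := Finset.sum_range_succ _ J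
      have h2 : ∑ i ∈ Finset.range (J+1), ‖Q (m i) t‖
          = ∑ i ∈ Finset.range J, ‖Q (m (i+1)) t‖ + ‖Q (m 0) t‖ := Finset.sum_range_succ' _ J
      have h3 : (0:ℝ) ≤ ‖Q (m 0) t‖ := norm_nonneg _
      have h4 : ∑ i ∈ Finset.range J, (‖Q (m i) t‖ + ‖Q (m (i+1)) t‖)
          = ∑ i ∈ Finset.range J, ‖Q (m i) t‖ + ∑ i ∈ Finset.range J, ‖Q (m (i+1)) t‖ :=
        Finset.sum_add_distrib
      linarith
    have hEq : g t - p t = (g t - f (m J) t) + Q (m J) t + W J t + (G J t - p t) := by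
      have h2 := hPQ (m J) t ht
      simp only [hG]
      rw [h2]
      abel
    have hWbd : ‖W J t‖ ≤ ∑ i ∈ Finset.range J, ‖y i t‖ := by
      simp only [hW]
      exact norm_sum_le _ _
    have h5 := hmj J t ht
    have h6 := hGp J t
    rw [dist_eq_norm] at h6
    have h7 : ‖g t - f (m J) t‖ ≤ (1/2:ℝ)^J/4 := by rw [norm_sub_rev]; exact h5
    have h8 : ‖g t - p t‖ ≤ ‖g t - f (m J) t‖ + ‖Q (m J) t‖ + ‖W J t‖ + ‖G J t - p t‖ := by
      rw [hEq]
      have ha := norm_add_le (g t - f (m J) t + Q (m J) t + W J t) (G J t - p t)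
      have hb : ‖g t - f (m J) t + Q (m J) t + W J t‖
          ≤ ‖g t - f (m J) t‖ + ‖Q (m J) t‖ + ‖W J t‖ := norm_add₃_le
      linarith
    have h9 : ∑ i ∈ Finset.range (J+1), ‖(2:ℝ) • Q (m i) t‖
        = 2 * ∑ i ∈ Finset.range (J+1), ‖Q (m i) t‖ := by
      rw [Finset.mul_sum]
      refine Finset.sum_congr rfl (fun i _ => ?_)
      rw [norm_smul, Real.norm_eq_abs]
      norm_num
    rw [h9]
    have hJpow : (0:ℝ) ≤ (1/2:ℝ)^J := by positivity
    linarith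
  -- each weighted average of the PAP₀ parts tends to 0
  have hA2 : ∀ k : ℕ, Tendsto (fun r => (uQ T u r)⁻¹ *
      ∫ t in Qr T r, ‖(2:ℝ) • Q k t‖ * u t ∂(deltaMeasure T)) (alongPi T) (nhds 0) := by
    intro k
    have hfun : (fun r => (uQ T u r)⁻¹ *
        ∫ t in Qr T r, ‖(2:ℝ) • Q k t‖ * u t ∂(deltaMeasure T))
        = fun r => 2 * ((uQ T u r)⁻¹ * ∫ t in Qr T r, ‖Q k t‖ * u t ∂(deltaMeasure T)) := by
      funext r
      have hi : (fun t => ‖(2:ℝ) • Q k t‖ * u t) = fun t => 2 * (‖Q k t‖ * u t) := by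
        funext t
        rw [norm_smul, Real.norm_eq_abs]
        norm_num
        ring
      rw [hi, integral_const_mul]
      ring
    rw [hfun]
    have := (hQ k).2.const_mul (2:ℝ)
    simpa using this
  set εJ : ℝ := ε/(4*((J:ℝ)+1)) with hεJ
  have hεJpos : 0 < εJ := by rw [hεJ]; positivity
  have hevQ : ∀ i ∈ Finset.range (J+1), ∀ᶠ r in alongPi T,
      (uQ T u r)⁻¹ * ∫ t in Qr T r, ‖(2:ℝ) • Q (m i) t‖ * u t ∂(deltaMeasure T) ≤ εJ := by
    intro i _
    have h := Metric.tendsto_nhds.1 (hA2 (m i)) _ hεJpos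
    filter_upwards [h] with r hr
    rw [Real.dist_eq, sub_zero] at hr
    exact (le_abs_self _).trans hr.le
  have hevAll := (eventually_all_finset (Finset.range (J+1))).2 hevQ
  filter_upwards [hev1, hevAll] with r hr1 hrQ
  rw [Real.dist_eq, sub_zero]
  have huQpos : (0:ℝ) < uQ T u r := lt_of_lt_of_le one_pos hr1
  have hApos := A_nonneg hTc hupos (fun t => g t - p t) huQpos
  rw [abs_of_nonneg hApos]
  have hQfc : ∀ i ∈ Finset.range (J+1), ContinuousOn (fun t => (2:ℝ) • Q (m i) t) T :=
    fun i _ => ((hQ (m i)).1.1).const_smul (2:ℝ)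
  have hQfb : ∀ i ∈ Finset.range (J+1), ∀ t ∈ T, ‖(2:ℝ) • Q (m i) t‖ ≤ 2 * CQ (m i) := by
    intro i _ t ht
    rw [norm_smul, Real.norm_eq_abs]
    have := hCQ (m i) t ht
    rw [abs_of_nonneg (by norm_num : (0:ℝ) ≤ 2)]
    linarith
  have hmaster := A_master (T := T) (q := fun t => g t - p t) hTc hupos hum hu3 hQfc hQfb (hgc.sub hpc)
    (fun t ht => (norm_sub_le _ _).trans (add_le_add (hCg t ht) (hCp t ht)))
    (by positivity : (0:ℝ) ≤ 2*(1/2:ℝ)^J) hdom hr1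
  have hsum : ∑ i ∈ Finset.range (J+1), (uQ T u r)⁻¹ *
      ∫ t in Qr T r, ‖(2:ℝ) • Q (m i) t‖ * u t ∂(deltaMeasure T)
      ≤ ∑ _i ∈ Finset.range (J+1), εJ :=
    Finset.sum_le_sum (fun i hi => hrQ i hi)
  rw [Finset.sum_const, Finset.card_range, nsmul_eq_mul] at hsum
  have hcast : ((J+1 : ℕ) : ℝ) * εJ = ε/4 := by
    rw [hεJ]
    push_cast
    field_simp
  rw [hcast] at hsum
  have hfinal : 2*(1/2:ℝ)^J < ε/4 := by linarith
  linarith
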